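/- Let G be the 5-pointed star, the graph with one central vertex adjacent to five leaf vertices of degree one (K_{1,5}). Then for each n ∈ {2, 3, 4}, there exists a common additive valuation (for instance, weight 1 on every vertex) such that no connected EF1 allocation of G among n agents exists (hence no connected EF1-outer allocation). -/
import Mathlib


open Finset

variable {V : Type*}

/-- A piece of an allocation: either empty or inducing a connected subgraph. -/
def ConnPiece (G : SimpleGraph V) (S : Finset V) : Prop :=
  S = ∅ ∨ (G.induce (S : Set V)).Connected

/-- A connected allocation: a partition of `V` into `n` pieces, each connected. -/
def IsConnAlloc (G : SimpleGraph V) {n : ℕ} (A : Fin n → Finset V) : Prop :=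
  (∀ x : V, ∃! i, x ∈ A i) ∧ ∀ i, ConnPiece G (A i)

def IsMonotoneVal (v : Finset V → ℝ) : Prop :=
  v ∅ = 0 ∧ (∀ S, 0 ≤ v S) ∧ ∀ S T : Finset V, S ⊆ T → v S ≤ v T

def IsAdditiveVal (v : Finset V → ℝ) : Prop :=
  (∀ S, 0 ≤ v S) ∧ ∀ S : Finset V, v S = ∑ x ∈ S, v {x}

def IsEF1 [DecidableEq V] {n : ℕ} (v : Fin n → Finset V → ℝ) (A : Fin n → Finset V) : Prop :=
  ∀ i j : Fin n, v i (A i) ≥ v i (A j) ∨ ∃ x ∈ A j, v i (A i) ≥ v i ((A j).erase x)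

def IsEF1Outer [DecidableEq V] (G : SimpleGraph V) {n : ℕ}
    (v : Fin n → Finset V → ℝ) (A : Fin n → Finset V) : Prop :=
  ∀ i j : Fin n, v i (A i) ≥ v i (A j) ∨
    ∃ x ∈ A j, ConnPiece G ((A j).erase x) ∧ v i (A i) ≥ v i ((A j).erase x)

/-- A generalized cutset for `G`, with gap `r ≥ 2`. -/
structure GenCutset (G : SimpleGraph V) where
  t : ℕ
  C : Fin t → Finset V
  τ : Fin t → ℕ
  r : ℕ
  r_ge : 2 ≤ r
  H : Fin ((∑ i, τ i) + r) → Finset V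
  C_nonempty : ∀ i, (C i).Nonempty
  C_disjoint : ∀ i j, i ≠ j → Disjoint (C i) (C j)
  C_connected : ∀ i, (G.induce ((C i : Set V))).Connected
  H_nonempty : ∀ j, (H j).Nonempty
  H_disjoint : ∀ j k, j ≠ k → Disjoint (H j) (H k)
  H_partition : ∀ x : V, (∀ i, x ∉ C i) ↔ ∃ j, x ∈ H j
  H_independent : ∀ j k, j ≠ k → ∀ x ∈ H j, ∀ y ∈ H k, ¬ G.Adj x y
  contact_unique : ∀ i j, ∀ x ∈ C i, ∀ y ∈ C i,
      (∃ z ∈ H j, G.Adj x z) → (∃ z ∈ H j, G.Adj y z) → x = y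
  typeI_tau : ∀ i, (C i).card = 1 → τ i = 1
  typeII_indep : ∀ i i', i ≠ i' → 1 < (C i).card → 1 < (C i').card →
      ∀ x ∈ C i, ∀ y ∈ C i', ¬ G.Adj x y
  typeII_contacts : ∀ i, 1 < (C i).card →
      (∃ S : Finset (Fin ((∑ i, τ i) + r)), S.card = 2 * τ i + 1 ∧
        ∀ j, j ∈ S ↔ ∃ x ∈ C i, ∃ z ∈ H j, G.Adj x z) ∧
      (∀ x ∈ C i, ∀ j k, (∃ z ∈ H j, G.Adj x z) → (∃ z ∈ H k, G.Adj x z) → j = k)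

/-- The valence of a generalized cutset. -/
abbrev GenCutset.valence {G : SimpleGraph V} (cs : GenCutset G) : ℕ := ∑ i, cs.τ i

/-- `S` dominates a member of the cutset. -/
def GenCutset.Dominates {G : SimpleGraph V} (cs : GenCutset G)
    (S : Finset V) (i : Fin cs.t) : Prop :=
  ((cs.C i).card = 1 ∧ cs.C i ⊆ S) ∨
  (1 < (cs.C i).card ∧ ∃ x, x ∈ cs.C i ∧ x ∈ S ∧ ∃ y, y ∈ cs.C i ∧ y ∈ S ∧ x ≠ y ∧
    (∃ j, ∃ z ∈ cs.H j, G.Adj x z) ∧ (∃ j, ∃ z ∈ cs.H j, G.Adj y z))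

/-- The 5-pointed star `K_{1,5}`: vertex 0 is the center, adjacent to the five leaves. -/
def Star5 : SimpleGraph (Fin 6) :=
  SimpleGraph.fromRel (fun x y => x = 0 ∧ y ≠ 0)


lemma star5_adj {x y : Fin 6} (h : Star5.Adj x y) : x = 0 ∨ y = 0 := by
  rcases h with ⟨-, h | h⟩
  · exact Or.inl h.1
  · exact Or.inr h.1

lemma reach_eq {W : Type*} {H : SimpleGraph W} (hno : ∀ a b, ¬ H.Adj a b)
    {x y : W} (h : H.Reachable x y) : x = y := by
  obtain ⟨w⟩ := h
  cases w with
  | nil => rfl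
  | cons h' _ => exact absurd h' (hno _ _)

lemma piece_card_le_one {S : Finset (Fin 6)} (h : ConnPiece Star5 S)
    (h0 : (0 : Fin 6) ∉ S) : S.card ≤ 1 := by
  by_contra hc
  push_neg at hc
  obtain ⟨x, hx, y, hy, hxy⟩ := Finset.one_lt_card.mp hc
  rcases h with h | h
  · simp [h] at hx
  · have hno : ∀ a b : (S : Set (Fin 6)), ¬ (Star5.induce (S : Set (Fin 6))).Adj a b := by
      rintro ⟨a, ha⟩ ⟨b, hb⟩ hadj
      have hab : Star5.Adj a b := hadj
      rcases star5_adj hab with rfl | rfl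
      · exact h0 (by simpa using ha)
      · exact h0 (by simpa using hb)
    have := reach_eq hno (h.preconnected ⟨x, by simpa using hx⟩ ⟨y, by simpa using hy⟩)
    exact hxy (by simpa using this)

/-- for each `n ∈ {2, 3, 4}` there is a common additive valuation under
which the 5-pointed star has no connected EF1 (hence no connected EF1-outer) allocation
among `n` agents. -/
theorem star5_no_connected_EF1 (n : ℕ) (hn : n = 2 ∨ n = 3 ∨ n = 4) :
    ∃ v : Finset (Fin 6) → ℝ, IsAdditiveVal v ∧
      ∀ A : Fin n → Finset (Fin 6), IsConnAlloc Star5 A →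
        ¬ IsEF1 (fun _ : Fin n => v) A ∧ ¬ IsEF1Outer Star5 (fun _ : Fin n => v) A := by
  refine ⟨fun S => (S.card : ℝ), ⟨fun S => by positivity, fun S => by simp⟩, ?_⟩
  intro A ⟨hpart, hconn⟩
  have hn2 : 2 ≤ n := by omega
  have hn4 : n ≤ 4 := by omega
  -- the piece containing the center
  obtain ⟨i0, h0i0, huniq⟩ := hpart 0
  -- other pieces have card ≤ 1
  have hsmall : ∀ j, j ≠ i0 → (A j).card ≤ 1 := by
    intro j hj
    refine piece_card_le_one (hconn j) fun h0 => hj (huniq j h0)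
  -- sum of cards is 6
  have hdisj : ∀ i j : Fin n, i ≠ j → Disjoint (A i) (A j) := by
    intro i j hij
    refine Finset.disjoint_left.mpr fun x hxi hxj => ?_
    obtain ⟨k, -, hu⟩ := hpart x
    exact hij ((hu i hxi).trans (hu j hxj).symm)
  have hsum : ∑ i : Fin n, (A i).card = 6 := by
    have hun : Finset.univ.biUnion A = (Finset.univ : Finset (Fin 6)) := by
      refine Finset.eq_univ_iff_forall.mpr fun x => ?_
      obtain ⟨i, hi, -⟩ := hpart x
      exact Finset.mem_biUnion.mpr ⟨i, Finset.mem_univ i, hi⟩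
    calc ∑ i : Fin n, (A i).card
        = (Finset.univ.biUnion A).card :=
          (Finset.card_biUnion (fun i _ j _ h => hdisj i j h)).symm
      _ = 6 := by rw [hun]; simp
  -- the center piece is big
  have hbig : 3 ≤ (A i0).card := by
    have h1 : ∑ i ∈ Finset.univ.erase i0, (A i).card ≤ 3 := by
      calc ∑ i ∈ Finset.univ.erase i0, (A i).card
          ≤ ∑ _i ∈ Finset.univ.erase i0, 1 :=
            Finset.sum_le_sum fun i hi => hsmall i (Finset.mem_erase.mp hi).1
        _ = (Finset.univ.erase i0).card := by simp
        _ ≤ 3 := by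
            have : (Finset.univ.erase i0).card = n - 1 := by
              rw [Finset.card_erase_of_mem (Finset.mem_univ i0)]; simp
            omega
    have h2 : (A i0).card + ∑ i ∈ Finset.univ.erase i0, (A i).card = 6 := by
      exact (Finset.add_sum_erase _ (fun i => (A i).card) (Finset.mem_univ i0)).trans hsum
    omega
  -- a witness of envy
  have : Nontrivial (Fin n) := Fin.nontrivial_iff_two_le.mpr hn2
  obtain ⟨j, hj⟩ := exists_ne i0
  have hEF1 : ¬ IsEF1 (fun _ : Fin n => fun S => ((S.card : ℝ))) A := by
    intro hef
    rcases hef j i0 with h | ⟨x, hx, h⟩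
    · have := hsmall j hj
      simp only [ge_iff_le, Nat.cast_le] at h
      omega
    · have hc : ((A i0).erase x).card = (A i0).card - 1 :=
        Finset.card_erase_of_mem hx
      have := hsmall j hj
      simp only [ge_iff_le, Nat.cast_le] at h
      omega
  refine ⟨hEF1, fun hef => hEF1 fun i j => ?_⟩
  rcases hef i j with h | ⟨x, hx, -, h⟩
  · exact Or.inl h
  · exact Or.inr ⟨x, hx, h⟩
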